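/- Let (D, ⊣, ⊢) be a diassociative algebra and D_Ass the quotient of D by the ideal generated by {a ⊣ b − a ⊢ b}. Then D_Ass is an associative algebra with [a]·[b] = [a ⊣ b], D is a D_Ass-bimodule via [a]·b = a ⊢ b and b·[a] = b ⊣ a, and the quotient map q : D → D_Ass is a relative averaging operator. Moreover, the diassociative structure on D induced by q coincides with the original one. -/
import Mathlib


/-- The five diassociative algebra identities for a pair of binary operations. -/
def IsDiassoc {D : Type*} (dl dr : D → D → D) : Prop :=
  ∀ x y z : D,
    dl (dl x y) z = dl x (dl y z) ∧
    dl x (dl y z) = dl x (dr y z) ∧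
    dl (dr x y) z = dr x (dl y z) ∧
    dr (dl x y) z = dr (dr x y) z ∧
    dr (dr x y) z = dr x (dr y z)

/-- The ideal of a diassociative algebra generated by the elements `a ⊣ b − a ⊢ b`:
the smallest additive subgroup containing these elements and closed under
left/right multiplication by arbitrary elements via both operations. -/
def diassIdeal {D : Type*} [AddCommGroup D] (dl dr : D → D → D) : AddSubgroup D :=
  sInf {S : AddSubgroup D |
    (∀ a b : D, dl a b - dr a b ∈ S) ∧
    ∀ x ∈ S, ∀ d : D, dl x d ∈ S ∧ dl d x ∈ S ∧ dr x d ∈ S ∧ dr d x ∈ S}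

/-- For a diassociative algebra `D`, the quotient `D_Ass = D / I`
(by the ideal generated by the `a⊣b − a⊢b`) is an associative algebra with
`[a]·[b] = [a⊣b] = [a⊢b]`, `D` is a `D_Ass`-bimodule via `[a]·b = a⊢b`,
`b·[a] = b⊣a`, the quotient map `q` is a relative averaging operator, and the
diassociative structure induced by `q` coincides with the original one. -/
theorem quotient_relativeAveraging
    (D : Type*) [AddCommGroup D] (dl dr : D → D → D)
    (hdl₁ : ∀ a b c : D, dl (a + b) c = dl a c + dl b c)
    (hdl₂ : ∀ a b c : D, dl a (b + c) = dl a b + dl a c)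
    (hdr₁ : ∀ a b c : D, dr (a + b) c = dr a c + dr b c)
    (hdr₂ : ∀ a b c : D, dr a (b + c) = dr a b + dr a c)
    (hD : IsDiassoc dl dr) :
    letI I := diassIdeal dl dr
    let q : D →+ D ⧸ I := QuotientAddGroup.mk' I
    ∃ (mul : (D ⧸ I) → (D ⧸ I) → (D ⧸ I))
      (la : (D ⧸ I) → D → D) (ra : D → (D ⧸ I) → D),
      -- the product is well defined by `[a]·[b] = [a⊣b] = [a⊢b]`
      (∀ a b : D, mul (q a) (q b) = q (dl a b)) ∧
      (∀ a b : D, mul (q a) (q b) = q (dr a b)) ∧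
      -- the actions are well defined by `[a]·b = a ⊢ b` and `b·[a] = b ⊣ a`
      (∀ a b : D, la (q a) b = dr a b) ∧
      (∀ b a : D, ra b (q a) = dl b a) ∧
      -- `D_Ass` is an associative algebra
      (∀ x y z : D ⧸ I, mul (mul x y) z = mul x (mul y z)) ∧
      (∀ x y z : D ⧸ I, mul (x + y) z = mul x z + mul y z) ∧
      (∀ x y z : D ⧸ I, mul x (y + z) = mul x y + mul x z) ∧
      -- `D` is a `D_Ass`-bimodule
      (∀ (x y : D ⧸ I) (b : D), la (mul x y) b = la x (la y b)) ∧
      (∀ (b : D) (x y : D ⧸ I), ra (ra b x) y = ra b (mul x y)) ∧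
      (∀ (x : D ⧸ I) (b : D) (y : D ⧸ I), ra (la x b) y = la x (ra b y)) ∧
      (∀ (x : D ⧸ I) (b b' : D), la x (b + b') = la x b + la x b') ∧
      (∀ (x y : D ⧸ I) (b : D), la (x + y) b = la x b + la y b) ∧
      (∀ (b b' : D) (x : D ⧸ I), ra (b + b') x = ra b x + ra b' x) ∧
      (∀ (b : D) (x y : D ⧸ I), ra b (x + y) = ra b x + ra b y) ∧
      -- the quotient map is a relative averaging operator
      (∀ u v : D, mul (q u) (q v) = q (la (q u) v)) ∧
      (∀ u v : D, mul (q u) (q v) = q (ra u (q v))) ∧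
      -- the induced diassociative structure coincides with the original one
      (∀ u v : D, ra u (q v) = dl u v) ∧
      (∀ u v : D, la (q u) v = dr u v) := by

  set I : AddSubgroup D := diassIdeal dl dr with hI
  intro q
  -- linearity helpers
  have dlz₁ : ∀ c : D, dl 0 c = 0 := fun c =>
    (AddMonoidHom.mk' (fun a => dl a c) (fun x y => hdl₁ x y c)).map_zero
  have dlsub₁ : ∀ a b c : D, dl (a - b) c = dl a c - dl b c := fun a b c =>
    (AddMonoidHom.mk' (fun a => dl a c) (fun x y => hdl₁ x y c)).map_sub a b
  have dlz₂ : ∀ c : D, dl c 0 = 0 := fun c =>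
    (AddMonoidHom.mk' (dl c) (hdl₂ c)).map_zero
  have dlsub₂ : ∀ c a b : D, dl c (a - b) = dl c a - dl c b := fun c a b =>
    (AddMonoidHom.mk' (dl c) (hdl₂ c)).map_sub a b
  have drz₁ : ∀ c : D, dr 0 c = 0 := fun c =>
    (AddMonoidHom.mk' (fun a => dr a c) (fun x y => hdr₁ x y c)).map_zero
  have drsub₁ : ∀ a b c : D, dr (a - b) c = dr a c - dr b c := fun a b c =>
    (AddMonoidHom.mk' (fun a => dr a c) (fun x y => hdr₁ x y c)).map_sub a b
  have drz₂ : ∀ c : D, dr c 0 = 0 := fun c =>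
    (AddMonoidHom.mk' (dr c) (hdr₂ c)).map_zero
  have drsub₂ : ∀ c a b : D, dr c (a - b) = dr c a - dr c b := fun c a b =>
    (AddMonoidHom.mk' (dr c) (hdr₂ c)).map_sub a b
  -- membership facts for I
  have hgen : ∀ a b : D, dl a b - dr a b ∈ I := by
    intro a b
    apply AddSubgroup.mem_sInf.2
    rintro S ⟨h1, _⟩
    exact h1 a b
  have hcl : ∀ x ∈ I, ∀ d : D, dl x d ∈ I ∧ dl d x ∈ I ∧ dr x d ∈ I ∧ dr d x ∈ I := by
    intro x hx d
    refine ⟨?_, ?_, ?_, ?_⟩ <;>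
    · apply AddSubgroup.mem_sInf.2
      rintro S hS
      obtain ⟨h1, h2⟩ := hS
      have hxS : x ∈ S := AddSubgroup.mem_sInf.1 hx S ⟨h1, h2⟩
      first
        | exact (h2 x hxS d).1
        | exact (h2 x hxS d).2.1
        | exact (h2 x hxS d).2.2.1
        | exact (h2 x hxS d).2.2.2
  -- the key vanishing ideal J
  have hIJ : ∀ x ∈ I, (∀ b : D, dr x b = 0) ∧ (∀ b : D, dl b x = 0) := by
    intro x hx
    set J : AddSubgroup D :=
      { carrier := {x | (∀ b : D, dr x b = 0) ∧ ∀ b : D, dl b x = 0}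
        zero_mem' := ⟨fun b => drz₁ b, fun b => dlz₂ b⟩
        add_mem' := by
          rintro a b ⟨ha1, ha2⟩ ⟨hb1, hb2⟩
          exact ⟨fun c => by rw [hdr₁, ha1, hb1, add_zero],
                 fun c => by rw [hdl₂, ha2, hb2, add_zero]⟩
        neg_mem' := by
          rintro a ⟨h1, h2⟩
          constructor
          · intro c
            have : dr (0 - a) c = dr 0 c - dr a c := drsub₁ 0 a c
            simpa [h1 c, drz₁ c] using this
          · intro c
            have : dl c (0 - a) = dl c 0 - dl c a := dlsub₂ c 0 a
            simpa [h2 c, dlz₂ c] using this } with hJ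
    have hJmem : J ∈ {S : AddSubgroup D |
        (∀ a b : D, dl a b - dr a b ∈ S) ∧
        ∀ x ∈ S, ∀ d : D, dl x d ∈ S ∧ dl d x ∈ S ∧ dr x d ∈ S ∧ dr d x ∈ S} := by
      constructor
      · intro a b
        constructor
        · intro c
          rw [drsub₁, (hD a b c).2.2.2.1, sub_self]
        · intro c
          rw [dlsub₂, (hD c a b).2.1, sub_self]
      · rintro y ⟨hy1, hy2⟩ d
        refine ⟨⟨?_, ?_⟩, ⟨?_, ?_⟩, ⟨?_, ?_⟩, ⟨?_, ?_⟩⟩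
        · intro c
          rw [(hD y d c).2.2.2.1, (hD y d c).2.2.2.2, hy1]
        · intro c
          rw [← (hD c y d).1, hy2, dlz₁]
        · intro c
          rw [(hD d y c).2.2.2.1, (hD d y c).2.2.2.2, hy1, drz₂]
        · intro c
          rw [← (hD c d y).1, hy2]
        · intro c
          rw [(hD y d c).2.2.2.2, hy1]
        · intro c
          rw [← (hD c y d).2.1, ← (hD c y d).1, hy2, dlz₁]
        · intro c
          rw [(hD d y c).2.2.2.2, hy1, drz₂]
        · intro c
          rw [← (hD c d y).2.1, ← (hD c d y).1, hy2]
    exact AddSubgroup.mem_sInf.1 hx J hJmem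
  -- quotient equality helper
  have qeq : ∀ a b : D, a - b ∈ I → q a = q b := by
    intro a b h
    have hz : b - a ∈ I := by simpa using I.neg_mem h
    exact (QuotientAddGroup.mk'_eq_mk' I).2 ⟨b - a, hz, by abel⟩
  have hrel : ∀ a b : D, (QuotientAddGroup.leftRel I).r a b → a - b ∈ I := by
    intro a b h
    have h' : -a + b ∈ I := (QuotientAddGroup.leftRel_apply).1 h
    have := I.neg_mem h'
    simpa [neg_add_rev, ← sub_eq_neg_add] using this
  -- well-definedness proofs
  have mulWD : ∀ a b a' b' : D, (QuotientAddGroup.leftRel I).r a a' →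
      (QuotientAddGroup.leftRel I).r b b' → q (dl a b) = q (dl a' b') := by
    intro a b a' b' ha hb
    apply qeq
    have h1 : dl (a - a') b ∈ I := (hcl _ (hrel a a' ha) b).1
    have h2 : dl a' (b - b') ∈ I := (hcl _ (hrel b b' hb) a').2.1
    have heq : dl a b - dl a' b' = dl (a - a') b + dl a' (b - b') := by
      rw [dlsub₁, dlsub₂]; abel
    rw [heq]
    exact I.add_mem h1 h2
  have laWD : ∀ (b a a' : D), (QuotientAddGroup.leftRel I).r a a' → dr a b = dr a' b := by
    intro b a a' ha
    have h := (hIJ _ (hrel a a' ha)).1 b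
    rw [drsub₁] at h
    exact sub_eq_zero.1 h
  have raWD : ∀ (b a a' : D), (QuotientAddGroup.leftRel I).r a a' → dl b a = dl b a' := by
    intro b a a' ha
    have h := (hIJ _ (hrel a a' ha)).2 b
    rw [dlsub₂] at h
    exact sub_eq_zero.1 h
  set mul : D ⧸ I → D ⧸ I → D ⧸ I :=
    fun x y => Quotient.liftOn₂' x y (fun a b => q (dl a b)) mulWD with hmul
  set la : D ⧸ I → D → D :=
    fun x b => Quotient.liftOn' x (fun a => dr a b) (laWD b) with hla
  set ra : D → D ⧸ I → D :=
    fun b x => Quotient.liftOn' x (fun a => dl b a) (raWD b) with hra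
  have hmulq : ∀ a b : D, mul (q a) (q b) = q (dl a b) := by intro a b; rfl
  have hlaq : ∀ a b : D, la (q a) b = dr a b := by intro a b; rfl
  have hraq : ∀ b a : D, ra b (q a) = dl b a := by intro b a; rfl
  have hqadd : ∀ a b : D, q a + q b = q (a + b) := fun a b => (map_add q a b).symm
  refine ⟨mul, la, ra, hmulq, ?_, hlaq, hraq, ?_, ?_, ?_, ?_, ?_, ?_, ?_, ?_, ?_, ?_,
    ?_, ?_, ?_, ?_⟩
  · intro a b
    rw [hmulq]
    exact qeq _ _ (hgen a b)
  · -- associativity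
    intro x y z
    induction x using Quotient.inductionOn'
    induction y using Quotient.inductionOn'
    induction z using Quotient.inductionOn'
    rename_i a b c
    show q (dl (dl a b) c) = q (dl a (dl b c))
    rw [(hD a b c).1]
  · intro x y z
    induction x using Quotient.inductionOn'
    induction y using Quotient.inductionOn'
    induction z using Quotient.inductionOn'
    rename_i a b c
    show mul (q a + q b) (q c) = mul (q a) (q c) + mul (q b) (q c)
    rw [hqadd, hmulq, hmulq, hmulq, hqadd, hdl₁]
  · intro x y z
    induction x using Quotient.inductionOn'
    induction y using Quotient.inductionOn'
    induction z using Quotient.inductionOn'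
    rename_i a b c
    show mul (q a) (q b + q c) = mul (q a) (q b) + mul (q a) (q c)
    rw [hqadd, hmulq, hmulq, hmulq, hqadd, hdl₂]
  · intro x y b
    induction x using Quotient.inductionOn'
    induction y using Quotient.inductionOn'
    rename_i a a'
    show dr (dl a a') b = dr a (dr a' b)
    rw [(hD a a' b).2.2.2.1, (hD a a' b).2.2.2.2]
  · intro b x y
    induction x using Quotient.inductionOn'
    induction y using Quotient.inductionOn'
    rename_i a a'
    show dl (dl b a) a' = dl b (dl a a')
    exact (hD b a a').1
  · intro x b y
    induction x using Quotient.inductionOn'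
    induction y using Quotient.inductionOn'
    rename_i a a'
    show dl (dr a b) a' = dr a (dl b a')
    exact (hD a b a').2.2.1
  · intro x b b'
    induction x using Quotient.inductionOn'
    rename_i a
    exact hdr₂ a b b'
  · intro x y b
    induction x using Quotient.inductionOn'
    induction y using Quotient.inductionOn'
    rename_i a a'
    show la (q a + q a') b = dr a b + dr a' b
    rw [hqadd, hlaq, hdr₁]
  · intro b b' x
    induction x using Quotient.inductionOn'
    rename_i a
    exact hdl₁ b b' a
  · intro b x y
    induction x using Quotient.inductionOn'
    induction y using Quotient.inductionOn'
    rename_i a a'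
    show ra b (q a + q a') = dl b a + dl b a'
    rw [hqadd, hraq, hdl₂]
  · intro u v
    rw [hmulq, hlaq]
    exact qeq _ _ (hgen u v)
  · intro u v
    rw [hmulq, hraq]
  · intro u v
    exact hraq u v
  · intro u v
    exact hlaq u v
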